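/- arXiv:2211.02044 — 2 statements merged into one kernel-verified Lean document; each statement's English description precedes it below -/
import Mathlib

section
/- Let L ≥ 2, α, β, γ ∈ ℝ with β > 0, γ ≠ 0 and α + 2β ≥ γ²/β. Let Z_L be the L×L symmetric tridiagonal matrix whose first row is (0, γ, 0, …, 0), whose lower-right (L-1)×(L-1) block is the tridiagonal Toeplitz matrix with α on the diagonal and β on the adjacent diagonals, and with γ in positions (1,2) and (2,1). Then every eigenvalue of Z_L is at most α + 2β, and the largest eigenvalue of Z_L converges to α + 2β as L → ∞. -/
open Matrix

/-- The `L×L` symmetric tridiagonal matrix `Z_L` with `0` in the top-left corner, `γ` in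
positions `(1,2)` and `(2,1)`, `α` on the rest of the diagonal and `β` on the rest of the
adjacent diagonals (1-based description, 0-based implementation). -/
def Zmat (α β γ : ℝ) (L : ℕ) : Matrix (Fin L) (Fin L) ℝ :=
  fun i j =>
    if i = j then (if i.val = 0 then 0 else α)
    else if i.val + 1 = j.val ∨ j.val + 1 = i.val then
      (if min i.val j.val = 0 then γ else β)
    else 0

section Aux

open Finset RealInnerProductSpace

/-- ℕ-indexed version of the entries of `Zmat`. -/
private def zval (α β γ : ℝ) (m n : ℕ) : ℝ :=
  if m = n then (if m = 0 then 0 else α)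
  else if m + 1 = n ∨ n + 1 = m then (if min m n = 0 then γ else β)
  else 0

private lemma Zmat_eq_zval (α β γ : ℝ) (L : ℕ) (i j : Fin L) :
    Zmat α β γ L i j = zval α β γ i.val j.val := by
  simp [Zmat, zval, Fin.ext_iff]

private lemma zsum (α β γ : ℝ) (y : ℕ → ℝ) :
    ∀ L : ℕ, 2 ≤ L →
    ∑ m ∈ range L, ∑ n ∈ range L, y m * zval α β γ m n * y n
      = α * ∑ n ∈ Ico 1 L, y n ^ 2 + 2 * γ * (y 0 * y 1)
        + 2 * β * ∑ n ∈ Ico 1 (L - 1), y n * y (n + 1) := by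
  intro L hL
  induction L, hL using Nat.le_induction with
  | base =>
      simp [Finset.sum_range_succ, zval]
      ring
  | succ L hL ih =>
      obtain ⟨K, rfl⟩ : ∃ K, L = K + 2 := ⟨L - 2, by omega⟩
      rw [Finset.sum_range_succ]
      have hrow : ∀ m ∈ range (K + 2),
          (∑ n ∈ range (K + 2 + 1), y m * zval α β γ m n * y n)
            = (∑ n ∈ range (K + 2), y m * zval α β γ m n * y n)
              + (if m = K + 1 then y (K + 1) * β * y (K + 2) else 0) := by
        intro m hm
        rw [Finset.sum_range_succ]
        congr 1
        simp only [mem_range] at hm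
        by_cases hmk : m = K + 1
        · subst hmk
          rw [if_pos rfl]
          have : zval α β γ (K + 1) (K + 2) = β := by
            rw [zval, if_neg (by omega), if_pos (by omega), if_neg (by omega)]
          rw [this]
        · rw [if_neg hmk]
          have : zval α β γ m (K + 2) = 0 := by
            rw [zval, if_neg (by omega), if_neg (by omega)]
          rw [this]; ring
      rw [Finset.sum_congr rfl hrow]
      rw [Finset.sum_add_distrib, Finset.sum_ite_eq' (range (K+2)) (K+1)
        (fun _ => y (K + 1) * β * y (K + 2)), if_pos (by simp)]
      have hlast : (∑ n ∈ range (K + 2 + 1), y (K + 2) * zval α β γ (K + 2) n * y n)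
          = y (K + 2) * β * y (K + 1) + y (K + 2) * α * y (K + 2) := by
        rw [Finset.sum_range_succ]
        have h1 : zval α β γ (K + 2) (K + 2) = α := by
          rw [zval, if_pos rfl, if_neg (by omega)]
        have h2 : (∑ n ∈ range (K + 2), y (K + 2) * zval α β γ (K + 2) n * y n)
            = y (K + 2) * β * y (K + 1) := by
          rw [Finset.sum_eq_single (K + 1)]
          · rw [zval, if_neg (by omega), if_pos (by omega), if_neg (by omega)]
          · intro n hn hne
            simp only [mem_range] at hn
            rw [zval, if_neg (by omega), if_neg (by omega)]
            ring
          · simp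
        rw [h1, h2]
      rw [hlast, ih]
      have e1 : K + 2 + 1 - 1 = K + 2 := by omega
      have e2 : K + 2 - 1 = K + 1 := by omega
      rw [e1, e2]
      rw [Finset.sum_Ico_succ_top (by omega : 1 ≤ K + 2),
          Finset.sum_Ico_succ_top (by omega : 1 ≤ K + 1),
          Finset.sum_Ico_succ_top (by omega : 1 ≤ K + 1)]
      ring

private lemma key_ineq (α β γ : ℝ) (hβ : 0 < β) (h : γ ^ 2 / β ≤ α + 2 * β) (y : ℕ → ℝ) :
    ∀ L : ℕ, 2 ≤ L →
    α * ∑ n ∈ Ico 1 L, y n ^ 2 + 2 * γ * (y 0 * y 1)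
        + 2 * β * ∑ n ∈ Ico 1 (L - 1), y n * y (n + 1)
      ≤ (α + 2 * β) * ∑ n ∈ range L, y n ^ 2 - β * y (L - 1) ^ 2 := by
  have h' : γ ^ 2 ≤ (α + 2 * β) * β := (div_le_iff₀ hβ).mp h
  intro L hL
  induction L, hL using Nat.le_induction with
  | base =>
      simp [Finset.sum_range_succ, show Ico 1 2 = {1} from rfl]
      nlinarith [sq_nonneg (γ * y 0 - β * y 1), sq_nonneg (y 0), sq_nonneg (y 1),
        mul_pos hβ hβ]
  | succ L hL ih =>
      obtain ⟨K, rfl⟩ : ∃ K, L = K + 2 := ⟨L - 2, by omega⟩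
      have e1 : K + 2 + 1 - 1 = K + 2 := by omega
      have e2 : K + 2 - 1 = K + 1 := by omega
      rw [e2] at ih
      rw [e1]
      have s1 : ∑ n ∈ Ico 1 (K + 2 + 1), y n ^ 2
          = ∑ n ∈ Ico 1 (K + 2), y n ^ 2 + y (K + 2) ^ 2 :=
        Finset.sum_Ico_succ_top (by omega) _
      have s2 : ∑ n ∈ Ico 1 (K + 2), y n * y (n + 1)
          = ∑ n ∈ Ico 1 (K + 1), y n * y (n + 1) + y (K + 1) * y (K + 1 + 1) :=
        Finset.sum_Ico_succ_top (by omega) _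
      have s3 : ∑ n ∈ range (K + 2 + 1), y n ^ 2
          = ∑ n ∈ range (K + 2), y n ^ 2 + y (K + 2) ^ 2 := Finset.sum_range_succ _ _
      rw [s1, s2, s3]
      have e3 : K + 1 + 1 = K + 2 := by omega
      rw [e3]
      nlinarith [ih, sq_nonneg (y (K + 1) - y (K + 2)), hβ.le]

/-- Expansion of the quadratic form of `Zmat` as a `ℕ`-indexed double sum. -/
private lemma quad_expand (α β γ : ℝ) (L : ℕ) (x : Fin L → ℝ) (y : ℕ → ℝ)
    (hy : ∀ i : Fin L, y i.val = x i) :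
    x ⬝ᵥ (Zmat α β γ L).mulVec x
      = ∑ m ∈ range L, ∑ n ∈ range L, y m * zval α β γ m n * y n := by
  have step : ∀ i : Fin L, x i * ((Zmat α β γ L).mulVec x) i
      = ∑ n ∈ range L, y i.val * zval α β γ i.val n * y n := by
    intro i
    rw [mulVec, dotProduct, Finset.mul_sum]
    rw [← Fin.sum_univ_eq_sum_range (fun n => y i.val * zval α β γ i.val n * y n) L]
    refine Finset.sum_congr rfl fun j _ => ?_
    rw [Zmat_eq_zval, hy, hy]
    ring
  rw [dotProduct, Finset.sum_congr rfl fun i _ => step i,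
      ← Fin.sum_univ_eq_sum_range (fun m => ∑ n ∈ range L, y m * zval α β γ m n * y n) L]

private lemma dot_expand (L : ℕ) (x : Fin L → ℝ) (y : ℕ → ℝ)
    (hy : ∀ i : Fin L, y i.val = x i) :
    x ⬝ᵥ x = ∑ n ∈ range L, y n ^ 2 := by
  rw [dotProduct, ← Fin.sum_univ_eq_sum_range (fun n => y n ^ 2) L]
  refine Finset.sum_congr rfl fun i _ => ?_
  rw [← hy]; ring

/-- The quadratic form of `Zmat` is bounded above by `(α + 2β)‖x‖²`. -/
private lemma Zmat_quad_le (α β γ : ℝ) (hβ : 0 < β) (h : γ ^ 2 / β ≤ α + 2 * β)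
    (L : ℕ) (hL : 2 ≤ L) (x : Fin L → ℝ) :
    x ⬝ᵥ (Zmat α β γ L).mulVec x ≤ (α + 2 * β) * (x ⬝ᵥ x) := by
  set y : ℕ → ℝ := fun n => if hn : n < L then x ⟨n, hn⟩ else 0 with hy'
  have hy : ∀ i : Fin L, y i.val = x i := fun i => by simp [hy', i.isLt]
  rw [quad_expand α β γ L x y hy, dot_expand L x y hy, zsum α β γ y L hL]
  have := key_ineq α β γ hβ h y L hL
  nlinarith [sq_nonneg (y (L - 1)), hβ.le, this]

private lemma inner_eq_dot {L : ℕ} (x y : EuclideanSpace ℝ (Fin L)) : ⟪x, y⟫ = x ⬝ᵥ y := by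
  simp [PiLp.inner_apply, dotProduct, RCLike.inner_apply]
  exact Finset.sum_congr rfl fun _ _ => mul_comm _ _

private lemma rayleigh_le {L : ℕ} (A : Matrix (Fin L) (Fin L) ℝ) (hA : A.IsHermitian) (c : ℝ)
    (hc : ∀ i, hA.eigenvalues i ≤ c) (x : EuclideanSpace ℝ (Fin L)) :
    ⟪x, Matrix.toEuclideanLin A x⟫ ≤ c * ⟪x, x⟫ := by
  set b := hA.eigenvectorBasis with hb
  have hrep : ∑ i, ⟪b i, x⟫ • b i = x := b.sum_repr' x
  have hTb : ∀ i, Matrix.toEuclideanLin A (b i) = hA.eigenvalues i • b i := by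
    intro i
    have h := hA.mulVec_eigenvectorBasis i
    ext j
    simpa [toEuclideanLin_apply] using congrFun h j
  have hAx : Matrix.toEuclideanLin A x = ∑ i, (⟪b i, x⟫ * hA.eigenvalues i) • b i := by
    conv_lhs => rw [← hrep]
    rw [map_sum]
    refine Finset.sum_congr rfl fun i _ => ?_
    rw [_root_.map_smul, hTb i, smul_smul]
  have h1 : ⟪x, Matrix.toEuclideanLin A x⟫ = ∑ i, hA.eigenvalues i * ⟪b i, x⟫ ^ 2 := by
    rw [hAx, inner_sum]
    refine Finset.sum_congr rfl fun i _ => ?_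
    rw [real_inner_smul_right, real_inner_comm]
    ring
  have h2 : ⟪x, x⟫ = ∑ i, ⟪b i, x⟫ ^ 2 := by
    conv_lhs => rw [← hrep]
    rw [sum_inner]
    refine Finset.sum_congr rfl fun i _ => ?_
    rw [real_inner_smul_left, hrep, real_inner_comm]
    ring
  rw [h1, h2, Finset.mul_sum]
  exact Finset.sum_le_sum fun i _ => mul_le_mul_of_nonneg_right (hc i) (sq_nonneg _)

private lemma rayleigh_le' {L : ℕ} (A : Matrix (Fin L) (Fin L) ℝ) (hA : A.IsHermitian) (c : ℝ)
    (hc : ∀ i, hA.eigenvalues i ≤ c) (x : Fin L → ℝ) :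
    x ⬝ᵥ A.mulVec x ≤ c * (x ⬝ᵥ x) := by
  have h := rayleigh_le A hA c hc ((WithLp.equiv 2 (Fin L → ℝ)).symm x)
  have hv : Matrix.toEuclideanLin A ((WithLp.equiv 2 (Fin L → ℝ)).symm x)
      = (WithLp.equiv 2 (Fin L → ℝ)).symm (A *ᵥ x) := by
    ext j
    simp [toEuclideanLin_apply]
  rw [hv, inner_eq_dot, inner_eq_dot] at h
  exact h


private lemma eigen_dot_self {L : ℕ} (A : Matrix (Fin L) (Fin L) ℝ) (hA : A.IsHermitian)
    (i : Fin L) : (⇑(hA.eigenvectorBasis i) : Fin L → ℝ) ⬝ᵥ ⇑(hA.eigenvectorBasis i) = 1 := by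
  have h2 : ⟪hA.eigenvectorBasis i, hA.eigenvectorBasis i⟫ = (1 : ℝ) := by
    rw [real_inner_self_eq_norm_sq, hA.eigenvectorBasis.orthonormal.1 i]
    norm_num
  exact (inner_eq_dot _ _).symm.trans h2

private lemma eig_le (α β γ : ℝ) (hβ : 0 < β) (h : γ ^ 2 / β ≤ α + 2 * β)
    (L : ℕ) (hL : 2 ≤ L) (hZ : (Zmat α β γ L).IsHermitian) (i : Fin L) :
    hZ.eigenvalues i ≤ α + 2 * β := by
  set v : Fin L → ℝ := ⇑(hZ.eigenvectorBasis i) with hv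
  have hm : Zmat α β γ L *ᵥ v = hZ.eigenvalues i • v := hZ.mulVec_eigenvectorBasis i
  have hvv : v ⬝ᵥ v = 1 := eigen_dot_self _ hZ i
  have hquad := Zmat_quad_le α β γ hβ h L hL v
  rw [hm, dotProduct_smul, hvv, smul_eq_mul, mul_one] at hquad
  linarith [hquad]

private lemma test_bound (α β γ : ℝ) (L : ℕ) (hL : 2 ≤ L)
    (hZ : (Zmat α β γ L).IsHermitian) (c : ℝ) (hc : ∀ i, hZ.eigenvalues i ≤ c) :
    α * ((L : ℝ) - 1) + 2 * β * ((L : ℝ) - 2) ≤ c * ((L : ℝ) - 1) := by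
  set x : Fin L → ℝ := fun i => if i.val = 0 then 0 else 1 with hx
  set y : ℕ → ℝ := fun n => if n = 0 then 0 else 1 with hy'
  have hy : ∀ i : Fin L, y i.val = x i := fun i => rfl
  have hr := rayleigh_le' (Zmat α β γ L) hZ c hc x
  rw [quad_expand α β γ L x y hy, dot_expand L x y hy, zsum α β γ y L hL] at hr
  have hy0 : y 0 = 0 := rfl
  have hs1 : ∑ n ∈ Ico 1 L, y n ^ 2 = ((L - 1 : ℕ) : ℝ) := by
    have hc1 : ∀ n ∈ Ico 1 L, y n ^ 2 = 1 := by
      intro n hn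
      simp only [mem_Ico] at hn
      rw [hy']
      simp only
      rw [if_neg (by omega : ¬ n = 0)]
      norm_num
    rw [Finset.sum_congr rfl hc1, Finset.sum_const, Nat.card_Ico, nsmul_eq_mul, mul_one]
  have hs2 : ∑ n ∈ Ico 1 (L - 1), y n * y (n + 1) = ((L - 2 : ℕ) : ℝ) := by
    have hc2 : ∀ n ∈ Ico 1 (L - 1), y n * y (n + 1) = 1 := by
      intro n hn
      simp only [mem_Ico] at hn
      rw [hy']
      simp only
      rw [if_neg (by omega : ¬ n = 0), if_neg (by omega : ¬ n + 1 = 0)]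
      norm_num
    rw [Finset.sum_congr rfl hc2, Finset.sum_const, Nat.card_Ico, nsmul_eq_mul, mul_one,
      show L - 1 - 1 = L - 2 from by omega]
  have hs3 : ∑ n ∈ range L, y n ^ 2 = ((L - 1 : ℕ) : ℝ) := by
    rw [Finset.range_eq_Ico, Finset.sum_eq_sum_Ico_succ_bot (by omega : (0:ℕ) < L), ← hs1]
    simp [hy0]
  rw [hs1, hs2, hs3, hy0] at hr
  rw [Nat.cast_sub (by omega : 1 ≤ L), Nat.cast_sub (by omega : 2 ≤ L)] at hr
  push_cast at hr
  linarith

end Aux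

/-- If `β > 0`, `γ ≠ 0` and `α + 2β ≥ γ²/β`, then every eigenvalue of `Z_L` is at most
`α + 2β`, and the largest eigenvalue of `Z_L` converges to `α + 2β` as `L → ∞`. -/
theorem Zmat_eigenvalue_bound (α β γ : ℝ) (hβ : 0 < β) (hγ : γ ≠ 0)
    (h : α + 2 * β ≥ γ ^ 2 / β) :
    (∀ L : ℕ, 2 ≤ L → ∀ hZ : (Zmat α β γ L).IsHermitian,
      ∀ i, hZ.eigenvalues i ≤ α + 2 * β) ∧
    (∀ ε : ℝ, 0 < ε → ∃ L₀ : ℕ, ∀ L : ℕ, L₀ ≤ L →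
      ∀ hZ : (Zmat α β γ L).IsHermitian, ∃ i, α + 2 * β - ε < hZ.eigenvalues i) := by
  constructor
  · exact fun L hL hZ i => eig_le α β γ hβ h L hL hZ i
  · intro ε hε
    refine ⟨max 2 (⌈2 * β / ε⌉₊ + 2), fun L hL hZ => ?_⟩
    have hL2 : 2 ≤ L := le_trans (le_max_left _ _) hL
    have hLc : ⌈2 * β / ε⌉₊ + 2 ≤ L := le_trans (le_max_right _ _) hL
    by_contra hcon
    push_neg at hcon
    have hb := test_bound α β γ L hL2 hZ (α + 2 * β - ε) hcon
    have hceil : 2 * β / ε ≤ (⌈2 * β / ε⌉₊ : ℝ) := Nat.le_ceil _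
    have hLc' : ((⌈2 * β / ε⌉₊ : ℝ) + 2) ≤ (L : ℝ) := by exact_mod_cast hLc
    have hdiv : ε * (2 * β / ε) = 2 * β := by field_simp
    nlinarith [mul_le_mul_of_nonneg_left (by linarith : 2 * β / ε + 1 ≤ (L : ℝ) - 1) hε.le]
end

section
/- Let b > 1 and L ∈ ℕ. Define the L×L matrices A_L with entries (A_L)_{i,j} = (1/2)·b^{min(i,j)-1} for i ≠ j and 0 for i = j, and B_L with entries (B_L)_{i,j} = (1/2)·b^{min(i,j)-1}. Then B_L is positive definite and for every nonzero x ∈ ℝ^L one has (xᵀ A_L x)/(xᵀ B_L x) ≤ 2(√b - 1)/(b - 1). -/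
open Matrix

/-- The matrix `A_L` with entries `(1/2)·b^{min(i,j)-1}` off the diagonal and `0` on the
diagonal (1-based description; with 0-based indices the exponent is `min i j`). -/
noncomputable def Amat (b : ℝ) (L : ℕ) : Matrix (Fin L) (Fin L) ℝ :=
  fun i j => if i = j then 0 else (1 / 2) * b ^ (min i.val j.val)

/-- The matrix `B_L` with entries `(1/2)·b^{min(i,j)-1}` (1-based description). -/
noncomputable def Bmat (b : ℝ) (L : ℕ) : Matrix (Fin L) (Fin L) ℝ :=
  fun i j => (1 / 2) * b ^ (min i.val j.val)

open Finset

private lemma aux_prod {L : ℕ} (g : Fin L → Fin L → ℝ) (R : Fin L → Fin L → Prop)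
    [DecidableRel R] :
    ∑ p ∈ (Finset.univ ×ˢ Finset.univ).filter (fun p : Fin L × Fin L => R p.1 p.2), g p.1 p.2
      = ∑ i, ∑ j ∈ Finset.univ.filter (fun j => R i j), g i j := by
  rw [Finset.sum_filter, Finset.sum_product]
  simp [Finset.sum_filter]

private lemma aux_swap {L : ℕ} (g : Fin L → Fin L → ℝ) :
    ∑ i, ∑ j ∈ Finset.univ.filter (fun j => j < i), g i j
      = ∑ i, ∑ j ∈ Finset.univ.filter (fun j => i < j), g j i := by
  rw [← aux_prod g (fun a b => b < a), ← aux_prod (fun a b => g b a) (fun a b => a < b)]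
  refine Finset.sum_nbij' Prod.swap Prod.swap ?_ ?_ ?_ ?_ ?_ <;> simp [Finset.mem_filter]

private lemma aux_geom {s : ℝ} (hs0 : 0 ≤ s) (hs1 : s < 1) (n : ℕ) :
    ∑ k ∈ Finset.range n, s ^ k ≤ (1 - s)⁻¹ := by
  have h1s : 0 < 1 - s := by linarith
  rw [geom_sum_eq (by linarith : s ≠ 1)]
  have : (s ^ n - 1) / (s - 1) = (1 - s ^ n) / (1 - s) := by
    rw [div_eq_div_iff (by linarith) (by linarith)]; ring
  rw [this, inv_eq_one_div]
  gcongr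
  linarith [pow_nonneg hs0 n]

private lemma aux_expsum {L : ℕ} {s : ℝ} (hs0 : 0 < s) (hs1 : s < 1)
    (T : Finset (Fin L)) (e : Fin L → ℕ)
    (h1 : ∀ i ∈ T, 1 ≤ e i) (h2 : ∀ i ∈ T, e i ≤ L)
    (hinj : ∀ i ∈ T, ∀ j ∈ T, e i = e j → i = j) :
    ∑ i ∈ T, s ^ (e i) ≤ s * (1 - s)⁻¹ := by
  have h1s : 0 < 1 - s := by linarith
  rw [show ∑ i ∈ T, s ^ e i = ∑ k ∈ T.image e, s ^ k from
    (Finset.sum_image (g := e) (f := fun k => s ^ k) hinj).symm]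
  have hsub : T.image e ⊆ Finset.Icc 1 L := by
    intro k hk
    simp only [Finset.mem_image] at hk
    obtain ⟨i, hi, rfl⟩ := hk
    exact Finset.mem_Icc.2 ⟨h1 i hi, h2 i hi⟩
  have step1 : ∑ k ∈ T.image e, s ^ k ≤ ∑ k ∈ Finset.Icc 1 L, s ^ k :=
    Finset.sum_le_sum_of_subset_of_nonneg hsub (fun k _ _ => (pow_pos hs0 k).le)
  have hins : insert 0 (Finset.Icc 1 L) = Finset.range (L + 1) := by
    ext k; simp [Nat.lt_succ_iff]; omega
  have h0 : (0 : ℕ) ∉ Finset.Icc 1 L := by simp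
  have hg := aux_geom hs0.le hs1 (L + 1)
  rw [← hins, Finset.sum_insert h0] at hg
  have heq : (1 - s)⁻¹ - 1 = s * (1 - s)⁻¹ := by field_simp; ring
  simp only [pow_zero] at hg
  linarith

/-- For `b > 1` and `L ≥ 1`, the matrix `B_L` is positive definite and for every nonzero
`x ∈ ℝ^L` one has `(xᵀ A_L x)/(xᵀ B_L x) ≤ 2(√b - 1)/(b - 1)`. -/
theorem quad_form_ratio_bound (b : ℝ) (hb : 1 < b) (L : ℕ) (hL : 1 ≤ L) :
    (Bmat b L).PosDef ∧
    ∀ x : Fin L → ℝ, x ≠ 0 →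
      (x ⬝ᵥ (Amat b L).mulVec x) / (x ⬝ᵥ (Bmat b L).mulVec x)
        ≤ 2 * (Real.sqrt b - 1) / (b - 1) := by
  classical
  have hb0 : (0 : ℝ) < b := by linarith
  set r := Real.sqrt b with hrdef
  have hr2 : r ^ 2 = b := Real.sq_sqrt hb0.le
  have hr1 : 1 < r := by nlinarith [Real.sqrt_nonneg b]
  have hr0 : 0 < r := by linarith
  -- the telescoping coefficients
  set c : ℕ → ℝ := fun k => if k = 0 then 1 else b ^ k - b ^ (k - 1) with hcdef
  have hck : ∀ k, 0 < c k := by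
    intro k
    cases k with
    | zero => simp [hcdef]
    | succ n =>
      have hbn : 0 < b ^ n := pow_pos hb0 n
      simp only [hcdef, Nat.succ_ne_zero, if_false, Nat.add_sub_cancel]
      rw [pow_succ]
      nlinarith
  have htel : ∀ n, ∑ k ∈ Finset.range (n + 1), c k = b ^ n := by
    intro n
    induction n with
    | zero => simp [hcdef]
    | succ n ih =>
      rw [Finset.sum_range_succ, ih]
      simp only [hcdef, Nat.succ_ne_zero, if_false, Nat.add_sub_cancel]
      ring
  -- the quadratic form of Bmat as a sum of squares
  have hQ2 : ∀ x : Fin L → ℝ,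
      ∑ i : Fin L, ∑ j : Fin L, b ^ (min i.val j.val) * (x i * x j)
        = ∑ k ∈ Finset.range L,
            c k * (∑ i ∈ Finset.univ.filter (fun i : Fin L => k ≤ i.val), x i) ^ 2 := by
    intro x
    have hmin : ∀ i j : Fin L, (b : ℝ) ^ (min i.val j.val)
        = ∑ k ∈ Finset.range L,
            c k * (if k ≤ i.val then (1 : ℝ) else 0) * (if k ≤ j.val then (1 : ℝ) else 0) := by
      intro i j
      have h1 : ∀ k, c k * (if k ≤ i.val then (1 : ℝ) else 0) * (if k ≤ j.val then (1 : ℝ) else 0)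
          = if k ≤ min i.val j.val then c k else 0 := by
        intro k
        by_cases hki : k ≤ i.val <;> by_cases hkj : k ≤ j.val <;>
          simp [hki, hkj, le_min_iff]
      rw [Finset.sum_congr rfl (fun k _ => h1 k), ← Finset.sum_filter]
      have h2 : (Finset.range L).filter (fun k => k ≤ min i.val j.val)
          = Finset.range (min i.val j.val + 1) := by
        ext k
        have hi := i.isLt
        have hj := j.isLt
        simp only [Finset.mem_filter, Finset.mem_range, Nat.lt_succ_iff]
        omega
      rw [h2, htel]
    calc ∑ i : Fin L, ∑ j : Fin L, b ^ (min i.val j.val) * (x i * x j)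
        = ∑ i : Fin L, ∑ j : Fin L, ∑ k ∈ Finset.range L,
            (c k * ((if k ≤ i.val then (1 : ℝ) else 0) * x i))
              * ((if k ≤ j.val then (1 : ℝ) else 0) * x j) := by
          refine Finset.sum_congr rfl fun i _ => Finset.sum_congr rfl fun j _ => ?_
          rw [hmin i j, Finset.sum_mul]
          exact Finset.sum_congr rfl fun k _ => by ring
      _ = ∑ k ∈ Finset.range L, ∑ i : Fin L, ∑ j : Fin L,
            (c k * ((if k ≤ i.val then (1 : ℝ) else 0) * x i))
              * ((if k ≤ j.val then (1 : ℝ) else 0) * x j) := by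
          rw [Finset.sum_congr rfl fun i _ => Finset.sum_comm, Finset.sum_comm]
      _ = ∑ k ∈ Finset.range L,
            c k * (∑ i ∈ Finset.univ.filter (fun i : Fin L => k ≤ i.val), x i) ^ 2 := by
          refine Finset.sum_congr rfl fun k _ => ?_
          rw [← Finset.sum_mul_sum]
          have hfac : ∑ i : Fin L, c k * ((if k ≤ i.val then (1 : ℝ) else 0) * x i)
              = c k * ∑ i ∈ Finset.univ.filter (fun i : Fin L => k ≤ i.val), x i := by
            rw [← Finset.mul_sum]
            congr 1
            rw [Finset.sum_filter]
            exact Finset.sum_congr rfl fun i _ => by by_cases h : k ≤ i.val <;> simp [h]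
          have hfac2 : ∑ j : Fin L, (if k ≤ j.val then (1 : ℝ) else 0) * x j
              = ∑ j ∈ Finset.univ.filter (fun j : Fin L => k ≤ j.val), x j := by
            rw [Finset.sum_filter]
            exact Finset.sum_congr rfl fun j _ => by by_cases h : k ≤ j.val <;> simp [h]
          rw [hfac, hfac2]
          ring
  -- positivity of the quadratic form of B
  have hBposQ : ∀ x : Fin L → ℝ, x ≠ 0 → 0 < x ⬝ᵥ (Bmat b L).mulVec x := by
    intro x hx
    have hexp : x ⬝ᵥ (Bmat b L).mulVec x
        = (1 / 2) * ∑ i : Fin L, ∑ j : Fin L, b ^ (min i.val j.val) * (x i * x j) := by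
      simp only [dotProduct, mulVec, Bmat]
      rw [Finset.mul_sum]
      refine Finset.sum_congr rfl fun i _ => ?_
      rw [Finset.mul_sum, Finset.mul_sum]
      exact Finset.sum_congr rfl fun j _ => by ring
    -- find k with S k ≠ 0
    have hSnz : ∃ k ∈ Finset.range L,
        (∑ i ∈ Finset.univ.filter (fun i : Fin L => k ≤ i.val), x i) ≠ 0 := by
      by_contra hcon
      push_neg at hcon
      apply hx
      have hSL : ∀ k, L ≤ k →
          (∑ i ∈ Finset.univ.filter (fun i : Fin L => k ≤ i.val), x i) = 0 := by
        intro k hk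
        rw [Finset.filter_false_of_mem, Finset.sum_empty]
        intro i _
        have := i.isLt
        omega
      have hall : ∀ k, (∑ i ∈ Finset.univ.filter (fun i : Fin L => k ≤ i.val), x i) = 0 := by
        intro k
        by_cases h : k < L
        · exact hcon k (Finset.mem_range.2 h)
        · exact hSL k (le_of_not_gt h)
      funext i
      have hstep : Finset.univ.filter (fun m : Fin L => i.val ≤ m.val)
          = insert i (Finset.univ.filter (fun m : Fin L => i.val + 1 ≤ m.val)) := by
        ext m
        simp only [Finset.mem_filter, Finset.mem_univ, true_and, Finset.mem_insert, Fin.ext_iff]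
        omega
      have h1 := hall i.val
      rw [hstep, Finset.sum_insert (by simp)] at h1
      have h2 := hall (i.val + 1)
      show x i = 0
      linarith [h1, h2]
    rw [hexp, hQ2 x]
    have pos : 0 < ∑ k ∈ Finset.range L,
        c k * (∑ i ∈ Finset.univ.filter (fun i : Fin L => k ≤ i.val), x i) ^ 2 := by
      refine Finset.sum_pos' (fun k _ => mul_nonneg (hck k).le (sq_nonneg _)) ?_
      obtain ⟨k, hkL, hk⟩ := hSnz
      refine ⟨k, hkL, mul_pos (hck k) ?_⟩
      exact lt_of_le_of_ne (sq_nonneg _) (Ne.symm (pow_ne_zero 2 hk))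
    linarith
  -- PosDef
  have hherm : (Bmat b L).IsHermitian := by
    unfold Matrix.IsHermitian
    ext i j
    simp only [Bmat, Matrix.conjTranspose_apply, star_trivial]
    rw [min_comm]
  have hPD : (Bmat b L).PosDef := by
    refine Matrix.posDef_iff_dotProduct_mulVec.mpr ⟨hherm, fun x hx => ?_⟩
    have hsx : star x = x := funext fun i => star_trivial _
    rw [hsx]
    exact hBposQ x hx
  refine ⟨hPD, ?_⟩
  -- the ratio bound
  intro x hx
  have hBx := hBposQ x hx
  set y : Fin L → ℝ := fun i => r ^ i.val * x i with hydef
  set s : ℝ := r⁻¹ with hsdef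
  have hs0 : 0 < s := inv_pos.2 hr0
  have hs1 : s < 1 := by
    rw [hsdef]
    rw [inv_lt_one_iff₀]
    right; exact hr1
  set E : ℝ := ∑ i : Fin L, b ^ i.val * x i ^ 2 with hEdef
  set O : ℝ := ∑ i : Fin L, ∑ j ∈ Finset.univ.filter (fun j : Fin L => i < j),
      b ^ i.val * (x i * x j) with hOdef
  have hEnn : 0 ≤ E := Finset.sum_nonneg fun i _ => by positivity
  -- quadratic form of A
  have hA : x ⬝ᵥ (Amat b L).mulVec x = O := by
    have hexp : x ⬝ᵥ (Amat b L).mulVec x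
        = ∑ i : Fin L, ∑ j : Fin L, x i * (Amat b L i j * x j) := by
      simp only [dotProduct, mulVec]
      refine Finset.sum_congr rfl fun i _ => ?_
      rw [Finset.mul_sum]
    rw [hexp]
    have hsplit : ∀ i : Fin L, ∑ j : Fin L, x i * (Amat b L i j * x j)
        = ∑ j ∈ Finset.univ.filter (fun j => i < j), x i * (Amat b L i j * x j)
          + ∑ j ∈ Finset.univ.filter (fun j => j < i), x i * (Amat b L i j * x j) := by
      intro i
      rw [← Finset.sum_filter_add_sum_filter_not Finset.univ (fun j => i < j)]
      congr 1
      have hf : Finset.univ.filter (fun j : Fin L => ¬ i < j)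
          = insert i (Finset.univ.filter (fun j : Fin L => j < i)) := by
        ext m
        simp only [Finset.mem_filter, Finset.mem_univ, true_and, Finset.mem_insert,
          Fin.lt_def, Fin.ext_iff, not_lt]
        omega
      rw [hf, Finset.sum_insert (by simp)]
      have : Amat b L i i = 0 := by simp [Amat]
      rw [this]
      simp
    rw [Finset.sum_congr rfl fun i _ => hsplit i, Finset.sum_add_distrib,
      aux_swap (fun i j => x i * (Amat b L i j * x j)), ← Finset.sum_add_distrib]
    rw [hOdef]
    refine Finset.sum_congr rfl fun i _ => ?_
    rw [← Finset.sum_add_distrib]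
    refine Finset.sum_congr rfl fun j hj => ?_
    have hij : i.val < j.val := by
      simp only [Finset.mem_filter, Fin.lt_def] at hj
      exact hj.2
    have hne : i ≠ j := fun h => by simp [h] at hij
    have hne' : j ≠ i := fun h => by simp [h] at hij
    simp only [Amat, if_neg hne, if_neg hne', min_eq_left hij.le,
      min_eq_right hij.le]
    ring
  -- quadratic form of B
  have hBex : x ⬝ᵥ (Bmat b L).mulVec x = O + (1 / 2) * E := by
    have hexp : x ⬝ᵥ (Bmat b L).mulVec x
        = ∑ i : Fin L, ∑ j : Fin L, x i * (Bmat b L i j * x j) := by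
      simp only [dotProduct, mulVec]
      refine Finset.sum_congr rfl fun i _ => ?_
      rw [Finset.mul_sum]
    have hAexp : x ⬝ᵥ (Amat b L).mulVec x
        = ∑ i : Fin L, ∑ j : Fin L, x i * (Amat b L i j * x j) := by
      simp only [dotProduct, mulVec]
      refine Finset.sum_congr rfl fun i _ => ?_
      rw [Finset.mul_sum]
    have hper : ∀ i j : Fin L, x i * (Bmat b L i j * x j)
        = x i * (Amat b L i j * x j)
          + (if j = i then (1 / 2) * b ^ i.val * x i ^ 2 else 0) := by
      intro i j
      by_cases h : j = i
      · subst h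
        simp [Amat, Bmat]
        ring
      · have h' : i ≠ j := fun hh => h hh.symm
        simp [Amat, Bmat, if_neg h, if_neg h']
    calc x ⬝ᵥ (Bmat b L).mulVec x
        = ∑ i : Fin L, ∑ j : Fin L, (x i * (Amat b L i j * x j)
            + (if j = i then (1 / 2) * b ^ i.val * x i ^ 2 else 0)) := by
          rw [hexp]
          exact Finset.sum_congr rfl fun i _ => Finset.sum_congr rfl fun j _ => hper i j
      _ = (∑ i : Fin L, ∑ j : Fin L, x i * (Amat b L i j * x j))
            + ∑ i : Fin L, (1 / 2) * b ^ i.val * x i ^ 2 := by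
          rw [← Finset.sum_add_distrib]
          refine Finset.sum_congr rfl fun i _ => ?_
          rw [Finset.sum_add_distrib]
          congr 1
          simp
      _ = O + (1 / 2) * E := by
          rw [← hAexp, hA, hEdef, Finset.mul_sum]
          congr 1
          exact Finset.sum_congr rfl fun i _ => by ring
  -- key facts about y
  have hysq : ∀ i : Fin L, y i ^ 2 = b ^ i.val * x i ^ 2 := by
    intro i
    simp only [hydef]
    rw [mul_pow, ← pow_mul, mul_comm i.val 2, pow_mul, hr2]
  have hbr : ∀ n : ℕ, (b : ℝ) ^ n = r ^ n * r ^ n := by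
    intro n
    rw [← hr2, ← pow_mul, two_mul, pow_add]
  -- per-pair rewriting
  have hpair : ∀ i j : Fin L, i < j →
      b ^ i.val * (x i * x j) = s ^ (j.val - i.val) * (y i * y j) := by
    intro i j hij
    have hij' : i.val < j.val := hij
    have hpow : s ^ (j.val - i.val) * r ^ j.val = r ^ i.val := by
      have hj : r ^ j.val = r ^ (j.val - i.val) * r ^ i.val := by
        rw [← pow_add]; congr 1; omega
      rw [hj, ← mul_assoc, hsdef, ← mul_pow, inv_mul_cancel₀ hr0.ne', one_pow, one_mul]
    have h1 : s ^ (j.val - i.val) * (y i * y j)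
        = (s ^ (j.val - i.val) * r ^ j.val) * (r ^ i.val * (x i * x j)) := by
      simp only [hydef]; ring
    rw [h1, hpow, hbr i.val]
    ring
  -- the key bound : O ≤ (r-1)⁻¹ * E
  have hcoef : s * (1 - s)⁻¹ = (r - 1)⁻¹ := by
    have h1 : (1 : ℝ) - s ≠ 0 := by linarith
    have h2 : r - 1 ≠ 0 := by linarith
    rw [hsdef]
    field_simp
  have hO : O ≤ (r - 1)⁻¹ * E := by
    have step1 : O ≤ ∑ i : Fin L, ∑ j ∈ Finset.univ.filter (fun j : Fin L => i < j),
        (1 / 2) * (s ^ (j.val - i.val) * y i ^ 2 + s ^ (j.val - i.val) * y j ^ 2) := by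
      rw [hOdef]
      refine Finset.sum_le_sum fun i _ => Finset.sum_le_sum fun j hj => ?_
      have hij : i < j := (Finset.mem_filter.1 hj).2
      rw [hpair i j hij]
      have hsd : 0 ≤ s ^ (j.val - i.val) := (pow_pos hs0 _).le
      nlinarith [sq_nonneg (y i - y j), mul_nonneg hsd (sq_nonneg (y i - y j))]
    have split : ∑ i : Fin L, ∑ j ∈ Finset.univ.filter (fun j : Fin L => i < j),
        (1 / 2) * (s ^ (j.val - i.val) * y i ^ 2 + s ^ (j.val - i.val) * y j ^ 2)
        = (1 / 2) * ((∑ i : Fin L, ∑ j ∈ Finset.univ.filter (fun j : Fin L => i < j),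
            s ^ (j.val - i.val) * y i ^ 2)
          + (∑ i : Fin L, ∑ j ∈ Finset.univ.filter (fun j : Fin L => i < j),
            s ^ (j.val - i.val) * y j ^ 2)) := by
      rw [← Finset.sum_add_distrib, Finset.mul_sum]
      refine Finset.sum_congr rfl fun i _ => ?_
      rw [← Finset.sum_add_distrib, Finset.mul_sum]
    have bound1 : ∑ i : Fin L, ∑ j ∈ Finset.univ.filter (fun j : Fin L => i < j),
        s ^ (j.val - i.val) * y i ^ 2 ≤ (r - 1)⁻¹ * E := by
      have hper : ∀ i : Fin L, ∑ j ∈ Finset.univ.filter (fun j : Fin L => i < j),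
          s ^ (j.val - i.val) * y i ^ 2 ≤ (r - 1)⁻¹ * (b ^ i.val * x i ^ 2) := by
        intro i
        have hsum : ∑ j ∈ Finset.univ.filter (fun j : Fin L => i < j),
            s ^ (j.val - i.val) ≤ s * (1 - s)⁻¹ := by
          refine aux_expsum hs0 hs1 _ (fun j => j.val - i.val) ?_ ?_ ?_
          · intro j hj
            have h' : i.val < j.val := (Finset.mem_filter.1 hj).2
            show 1 ≤ j.val - i.val
            omega
          · intro j hj
            have := j.isLt
            show j.val - i.val ≤ L
            omega
          · intro j hj j' hj' h
            have h1 : i.val < j.val := (Finset.mem_filter.1 hj).2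
            have h2 : i.val < j'.val := (Finset.mem_filter.1 hj').2
            have h3 : j.val - i.val = j'.val - i.val := h
            exact Fin.ext (by omega)
        calc ∑ j ∈ Finset.univ.filter (fun j : Fin L => i < j), s ^ (j.val - i.val) * y i ^ 2
            = (∑ j ∈ Finset.univ.filter (fun j : Fin L => i < j), s ^ (j.val - i.val))
              * y i ^ 2 := by rw [Finset.sum_mul]
          _ ≤ (s * (1 - s)⁻¹) * y i ^ 2 :=
              mul_le_mul_of_nonneg_right hsum (sq_nonneg _)
          _ = (r - 1)⁻¹ * (b ^ i.val * x i ^ 2) := by rw [hcoef, hysq i]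
      calc ∑ i : Fin L, ∑ j ∈ Finset.univ.filter (fun j : Fin L => i < j),
          s ^ (j.val - i.val) * y i ^ 2
          ≤ ∑ i : Fin L, (r - 1)⁻¹ * (b ^ i.val * x i ^ 2) := Finset.sum_le_sum fun i _ => hper i
        _ = (r - 1)⁻¹ * E := by rw [hEdef, Finset.mul_sum]
    have bound2 : ∑ i : Fin L, ∑ j ∈ Finset.univ.filter (fun j : Fin L => i < j),
        s ^ (j.val - i.val) * y j ^ 2 ≤ (r - 1)⁻¹ * E := by
      have hswap := aux_swap (fun a b : Fin L => s ^ (a.val - b.val) * y a ^ 2)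
      rw [← hswap]
      have hper : ∀ i : Fin L, ∑ j ∈ Finset.univ.filter (fun j : Fin L => j < i),
          s ^ (i.val - j.val) * y i ^ 2 ≤ (r - 1)⁻¹ * (b ^ i.val * x i ^ 2) := by
        intro i
        have hsum : ∑ j ∈ Finset.univ.filter (fun j : Fin L => j < i),
            s ^ (i.val - j.val) ≤ s * (1 - s)⁻¹ := by
          refine aux_expsum hs0 hs1 _ (fun j => i.val - j.val) ?_ ?_ ?_
          · intro j hj
            have h' : j.val < i.val := (Finset.mem_filter.1 hj).2
            show 1 ≤ i.val - j.val
            omega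
          · intro j hj
            have := i.isLt
            show i.val - j.val ≤ L
            omega
          · intro j hj j' hj' h
            have h1 : j.val < i.val := (Finset.mem_filter.1 hj).2
            have h2 : j'.val < i.val := (Finset.mem_filter.1 hj').2
            have h3 : i.val - j.val = i.val - j'.val := h
            exact Fin.ext (by omega)
        calc ∑ j ∈ Finset.univ.filter (fun j : Fin L => j < i), s ^ (i.val - j.val) * y i ^ 2
            = (∑ j ∈ Finset.univ.filter (fun j : Fin L => j < i), s ^ (i.val - j.val))
              * y i ^ 2 := by rw [Finset.sum_mul]
          _ ≤ (s * (1 - s)⁻¹) * y i ^ 2 :=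
              mul_le_mul_of_nonneg_right hsum (sq_nonneg _)
          _ = (r - 1)⁻¹ * (b ^ i.val * x i ^ 2) := by rw [hcoef, hysq i]
      calc ∑ i : Fin L, ∑ j ∈ Finset.univ.filter (fun j : Fin L => j < i),
          s ^ (i.val - j.val) * y i ^ 2
          ≤ ∑ i : Fin L, (r - 1)⁻¹ * (b ^ i.val * x i ^ 2) := Finset.sum_le_sum fun i _ => hper i
        _ = (r - 1)⁻¹ * E := by rw [hEdef, Finset.mul_sum]
    calc O ≤ _ := step1
      _ = _ := split
      _ ≤ (1 / 2) * ((r - 1)⁻¹ * E + (r - 1)⁻¹ * E) := by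
          have := add_le_add bound1 bound2
          linarith
      _ = (r - 1)⁻¹ * E := by ring
  -- final arithmetic
  have hc : 2 * (r - 1) / (b - 1) = 2 / (r + 1) := by
    have h1 : b - 1 = (r - 1) * (r + 1) := by rw [← hr2]; ring
    have h2 : r - 1 ≠ 0 := by linarith
    have h3 : r + 1 ≠ 0 := by linarith
    rw [h1]
    field_simp
  rw [hA, hBex]
  rw [hrdef] at hc ⊢
  rw [hBex] at hBx
  rw [div_le_iff₀ hBx, hc, div_mul_eq_mul_div, le_div_iff₀ (by linarith : (0:ℝ) < Real.sqrt b + 1)]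
  rw [← hrdef]
  have h1 : O * (r - 1) ≤ E := by
    have h2 := mul_le_mul_of_nonneg_right hO (by linarith : (0:ℝ) ≤ r - 1)
    have h3 : (r - 1)⁻¹ * E * (r - 1) = E := by
      rw [mul_comm, ← mul_assoc, mul_inv_cancel₀ (by linarith : r - 1 ≠ 0), one_mul]
    linarith
  nlinarith [h1]
end
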